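/- For a real number x with x² > 4 and all n ≥ 0, the Binet formula O_n(x) = (1/√(x²−4))·(λ₁(x)^n − λ₂(x)^n) holds, where λ₁(x) = (x+√(x²−4))/(2x) and λ₂(x) = (x−√(x²−4))/(2x). -/

import Mathlib

noncomputable def oresme : ℕ → ℝ → ℝ
  | 0 => fun _ => 0
  | 1 => fun x => 1/x
  | (n+2) => fun x => oresme (n+1) x - (1/x^2) * oresme n x

theorem oresme_binet (x : ℝ) (hx : x^2 > 4) (n : ℕ) :
    oresme n x = (1 / Real.sqrt (x^2 - 4)) *
      (((x + Real.sqrt (x^2 - 4)) / (2*x))^n - ((x - Real.sqrt (x^2 - 4)) / (2*x))^n) := by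
  have hx0 : x ≠ 0 := by
    intro h; rw [h] at hx; norm_num at hx
  have hpos : x^2 - 4 > 0 := by linarith
  have hs : Real.sqrt (x^2 - 4) > 0 := Real.sqrt_pos.mpr hpos
  have hs0 : Real.sqrt (x^2 - 4) ≠ 0 := ne_of_gt hs
  have hs2 : Real.sqrt (x^2 - 4) ^ 2 = x^2 - 4 := Real.sq_sqrt (le_of_lt hpos)
  set s := Real.sqrt (x^2 - 4) with hsdef
  have h1 : ((x + s) / (2*x))^2 = (x + s) / (2*x) - 1/x^2 := by
    field_simp
    linear_combination hs2
  have h2 : ((x - s) / (2*x))^2 = (x - s) / (2*x) - 1/x^2 := by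
    field_simp
    linear_combination hs2
  induction n using Nat.twoStepInduction with
  | zero => simp [oresme]
  | one =>
    show 1/x = _
    field_simp
    ring
  | more n ih1 ih2 =>
    show oresme (n+1) x - (1/x^2) * oresme n x = _
    rw [ih1, ih2]
    have e1 : ((x + s) / (2*x))^(n+2) = ((x + s) / (2*x))^n * (((x + s) / (2*x)) - 1/x^2) := by
      rw [show n+2 = n+1+1 from rfl, pow_succ, pow_succ, mul_assoc, ← sq, h1]
    have e2 : ((x - s) / (2*x))^(n+2) = ((x - s) / (2*x))^n * (((x - s) / (2*x)) - 1/x^2) := by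
      rw [show n+2 = n+1+1 from rfl, pow_succ, pow_succ, mul_assoc, ← sq, h2]
    rw [e1, e2, pow_succ, pow_succ]
    ring
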